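/- Let d ≥ 1, β > 0, N_c ≥ 1, and k ∈ ℝᵈ, and let M_G(k) be the complex d×d matrix with entries M_G(k)_{μν} = (2β/N_c)·[δ_{μν}·∑_{ρ=1}^{d} sin²(k_ρ/2) − exp(i(k_μ − k_ν)/2)·sin(k_μ/2)·sin(k_ν/2)]. Then the vector y⁰_k ∈ ℂᵈ with components (y⁰_k)_μ = exp(i k_μ/2)·sin(k_μ/2) satisfies M_G(k)·y⁰_k = 0. -/
import Mathlib


open Matrix Complex

/-- The gauge zero mode: the vector `(y⁰_k)_μ = e^{ik_μ/2} sin(k_μ/2)` is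
annihilated by the harmonic gauge matrix `M_G(k)`. -/
theorem gauge_matrix_zero_mode {d : ℕ} (hd : 1 ≤ d) (β : ℝ) (hβ : 0 < β)
    (Nc : ℕ) (hNc : 1 ≤ Nc) (k : Fin d → ℝ)
    (MG : Matrix (Fin d) (Fin d) ℂ)
    (hMG : ∀ μ ν : Fin d, MG μ ν = ((2 * β / Nc : ℝ) : ℂ) *
      ((if μ = ν then 1 else 0) * ((∑ ρ : Fin d, Real.sin (k ρ / 2) ^ 2 : ℝ) : ℂ)
        - Complex.exp (Complex.I * ((k μ - k ν : ℝ) : ℂ) / 2) *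
          ((Real.sin (k μ / 2) : ℂ)) * ((Real.sin (k ν / 2) : ℂ))))
    (y0 : Fin d → ℂ)
    (hy0 : ∀ μ : Fin d, y0 μ =
      Complex.exp (Complex.I * ((k μ : ℝ) : ℂ) / 2) * ((Real.sin (k μ / 2) : ℂ))) :
    MG *ᵥ y0 = 0 := by
  funext μ
  have key : ∀ ν : Fin d, MG μ ν * y0 ν =
      ((2 * β / Nc : ℝ) : ℂ) *
        ((if μ = ν then 1 else 0) * ((∑ ρ : Fin d, Real.sin (k ρ / 2) ^ 2 : ℝ) : ℂ) *
            (Complex.exp (Complex.I * ((k μ : ℝ) : ℂ) / 2) * ((Real.sin (k μ / 2) : ℂ)))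
          - Complex.exp (Complex.I * ((k μ : ℝ) : ℂ) / 2) * ((Real.sin (k μ / 2) : ℂ)) *
              (((Real.sin (k ν / 2) : ℂ)) ^ 2)) := by
    intro ν
    rw [hMG, hy0]
    have hexp : Complex.exp (Complex.I * ((k μ - k ν : ℝ) : ℂ) / 2) *
        Complex.exp (Complex.I * ((k ν : ℝ) : ℂ) / 2) =
        Complex.exp (Complex.I * ((k μ : ℝ) : ℂ) / 2) := by
      rw [← Complex.exp_add]
      congr 1
      push_cast
      ring
    rcases eq_or_ne μ ν with h | h
    · subst h
      simp only [if_pos rfl, sub_self, Complex.ofReal_zero, mul_zero, zero_div,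
        Complex.exp_zero, one_mul]
      ring
    · simp only [if_neg h]
      rw [← hexp]
      ring
  show ∑ ν : Fin d, MG μ ν * y0 ν = 0
  simp only [key]
  rw [← Finset.mul_sum]
  rw [Finset.sum_sub_distrib]
  have h1 : ∑ ν : Fin d, (if μ = ν then (1:ℂ) else 0) *
      ((∑ ρ : Fin d, Real.sin (k ρ / 2) ^ 2 : ℝ) : ℂ) *
      (Complex.exp (Complex.I * ((k μ : ℝ) : ℂ) / 2) * ((Real.sin (k μ / 2) : ℂ))) =
      ((∑ ρ : Fin d, Real.sin (k ρ / 2) ^ 2 : ℝ) : ℂ) *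
      (Complex.exp (Complex.I * ((k μ : ℝ) : ℂ) / 2) * ((Real.sin (k μ / 2) : ℂ))) := by
    rw [Finset.sum_eq_single μ]
    · simp
    · intro b _ hb; simp [Ne.symm hb]
    · simp
  have h2 : ∑ ν : Fin d, Complex.exp (Complex.I * ((k μ : ℝ) : ℂ) / 2) *
      ((Real.sin (k μ / 2) : ℂ)) * (((Real.sin (k ν / 2) : ℂ)) ^ 2) =
      Complex.exp (Complex.I * ((k μ : ℝ) : ℂ) / 2) * ((Real.sin (k μ / 2) : ℂ)) *
      ((∑ ρ : Fin d, Real.sin (k ρ / 2) ^ 2 : ℝ) : ℂ) := by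
    rw [← Finset.mul_sum]
    push_cast
    ring
  rw [h1, h2]
  ring
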